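/- Let T be a triangulated category, X an object of T, and n a natural number. If X/n is any cone of n·id_X, i.e., an object fitting in a distinguished triangle X --n·--> X --> X/n --> X[1], then the endomorphism group [X/n, X/n] is annihilated by n², i.e., n²·id_{X/n} = 0. -/

import Mathlib

open CategoryTheory Category Limits Pretriangulated

/-- In a triangulated category, if `X/n` is any cone of `n • 𝟙 X`, then the
endomorphism group of `X/n` is annihilated by `n ^ 2`. -/
theorem stmt0 {C : Type*} [Category C] [Preadditive C] [HasZeroObject C]
    [HasShift C ℤ] [∀ n : ℤ, (shiftFunctor C n).Additive] [Pretriangulated C]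
    (X : C) (n : ℕ) (Xn : C) (π : X ⟶ Xn) (δ : Xn ⟶ X⟦(1 : ℤ)⟧)
    (h : Triangle.mk ((n : ℤ) • 𝟙 X) π δ ∈ distTriang C) :
    ((n : ℤ) ^ 2) • 𝟙 Xn = 0 := by
  have hδ : ((n : ℤ) • 𝟙 Xn) ≫ δ = 0 := by
    have := comp_distTriang_mor_zero₃₁ _ h
    rw [Preadditive.zsmul_comp, ← Preadditive.comp_zsmul]
    simp only [id_comp]
    rw [show (n : ℤ) • δ = δ ≫ ((n : ℤ) • 𝟙 (X⟦(1 : ℤ)⟧)) by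
      rw [Preadditive.comp_zsmul, comp_id]]
    rw [show ((n : ℤ) • 𝟙 (X⟦(1 : ℤ)⟧)) = (shiftFunctor C (1 : ℤ)).map ((n : ℤ) • 𝟙 X) by
      simp]
    exact this
  obtain ⟨g, hg⟩ : ∃ g : Xn ⟶ X, (n : ℤ) • 𝟙 Xn = g ≫ π :=
    Triangle.coyoneda_exact₃ _ h ((n : ℤ) • 𝟙 Xn) hδ
  have hg' : g ≫ π = (n : ℤ) • 𝟙 Xn := hg.symm
  have hπ : ((n : ℤ) • 𝟙 X) ≫ π = 0 := comp_distTriang_mor_zero₁₂ _ h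
  calc ((n : ℤ) ^ 2) • 𝟙 Xn = ((n : ℤ) • 𝟙 Xn) ≫ ((n : ℤ) • 𝟙 Xn) := by
        rw [Preadditive.zsmul_comp, Preadditive.comp_zsmul, id_comp, smul_smul, sq]
    _ = g ≫ (π ≫ ((n : ℤ) • 𝟙 Xn)) := by rw [← hg', assoc]
    _ = g ≫ (((n : ℤ) • 𝟙 X) ≫ π) := by
        simp
    _ = 0 := by rw [hπ, comp_zero]
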